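/- For all nonnegative integers n and j, ∑_{k=j}^{n} C(n,k)·C(k,j)·(−1)^{k−j}·(1)_{n−k,λ}·⟨1⟩_{k−j,λ} = δ_{n,j}, where δ is the Kronecker delta. -/

import Mathlib

open Finset

noncomputable def dff (lam x : ℝ) (n : ℕ) : ℝ := ∏ i ∈ Finset.range n, (x - i * lam)

noncomputable def drf (lam x : ℝ) (n : ℕ) : ℝ := ∏ i ∈ Finset.range n, (x + i * lam)

lemma dff_succ (lam x : ℝ) (n : ℕ) : dff lam x (n+1) = dff lam x n * (x - n * lam) := by
  simp [dff, Finset.prod_range_succ]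

lemma vand (lam x y : ℝ) : ∀ N : ℕ, dff lam (x+y) N
    = ∑ m ∈ Finset.range (N+1), (N.choose m : ℝ) * dff lam x m * dff lam y (N-m) := by
  intro N
  induction N with
  | zero => simp [dff]
  | succ N ih =>
    rw [dff_succ, ih, Finset.sum_mul]
    have key : ∀ m ∈ Finset.range (N+1),
        (N.choose m : ℝ) * dff lam x m * dff lam y (N-m) * (x + y - N*lam)
        = (N.choose m : ℝ) * dff lam x (m+1) * dff lam y (N-m)
          + (N.choose m : ℝ) * dff lam x m * dff lam y (N-m+1) := by
      intro m hm
      rw [Finset.mem_range] at hm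
      have hm' : m ≤ N := Nat.lt_succ_iff.mp hm
      have hcast : ((N - m : ℕ) : ℝ) = (N : ℝ) - m := by
        push_cast [hm']; ring
      rw [dff_succ, dff_succ, hcast]
      ring
    rw [Finset.sum_congr rfl key, Finset.sum_add_distrib]
    have h1 : ∑ m ∈ Finset.range (N+1), (N.choose m : ℝ) * dff lam x (m+1) * dff lam y (N-m)
        = ∑ m ∈ Finset.range (N+2),
            (if m = 0 then 0 else ((N.choose (m-1) : ℕ) : ℝ)) * dff lam x m * dff lam y (N+1-m) := by
      have := Finset.sum_range_succ' (fun m =>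
        (if m = 0 then (0:ℝ) else ((N.choose (m-1) : ℕ) : ℝ)) * dff lam x m * dff lam y (N+1-m)) (N+1)
      rw [this]
      simp only [if_true, Nat.succ_sub_succ, zero_mul, add_zero, Nat.succ_ne_zero, if_false,
        Nat.succ_sub_one, Nat.sub_zero, eq_self_iff_true]
    have h2 : ∑ m ∈ Finset.range (N+1), (N.choose m : ℝ) * dff lam x m * dff lam y (N-m+1)
        = ∑ m ∈ Finset.range (N+2), (N.choose m : ℝ) * dff lam x m * dff lam y (N+1-m) := by
      have := Finset.sum_range_succ (fun m =>
        (N.choose m : ℝ) * dff lam x m * dff lam y (N+1-m)) (N+1)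
      rw [this, Nat.choose_eq_zero_of_lt (Nat.lt_succ_self N)]
      simp only [Nat.cast_zero, zero_mul, add_zero]
      apply Finset.sum_congr rfl
      intro m hm
      rw [Finset.mem_range] at hm
      congr 2
      omega
    rw [h1, h2, ← Finset.sum_add_distrib]
    refine Finset.sum_congr rfl fun m hm => ?_
    rcases Nat.eq_zero_or_pos m with rfl | hmpos
    · simp
    · obtain ⟨m', rfl⟩ : ∃ m', m = m' + 1 := ⟨m - 1, by omega⟩
      simp only [Nat.succ_ne_zero, if_false, Nat.succ_sub_one]
      rw [Nat.choose_succ_succ, Nat.cast_add]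
      ring

lemma drf_as_dff (lam : ℝ) (m : ℕ) : (-1:ℝ)^m * drf lam 1 m = dff lam (-1) m := by
  rw [dff, drf, show ((-1:ℝ)^m) = ∏ _i ∈ Finset.range m, (-1:ℝ) by simp,
    ← Finset.prod_mul_distrib]
  exact Finset.prod_congr rfl fun i _ => by ring

theorem stmt1 (lam : ℝ) (hlam : lam ≠ 0) (n j : ℕ) :
    ∑ k ∈ Finset.Icc j n, (Nat.choose n k : ℝ) * (Nat.choose k j : ℝ) *
      (-1 : ℝ) ^ (k - j) * dff lam 1 (n - k) * drf lam 1 (k - j)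
      = if n = j then 1 else 0 := by
  rcases lt_or_ge n j with h | h
  · rw [Finset.Icc_eq_empty (by omega), Finset.sum_empty, if_neg (by omega)]
  · rw [← Finset.Ico_add_one_right_eq_Icc, Finset.sum_Ico_eq_sum_range]
    have hr : n + 1 - j = (n - j) + 1 := by omega
    rw [hr]
    set N := n - j with hN
    have key : ∀ m ∈ Finset.range (N+1),
        (Nat.choose n (j+m) : ℝ) * (Nat.choose (j+m) j : ℝ) * (-1:ℝ)^(j+m-j) *
          dff lam 1 (n-(j+m)) * drf lam 1 (j+m-j)
        = (Nat.choose n j : ℝ) * ((Nat.choose N m : ℝ) * dff lam (-1) m * dff lam 1 (N-m)) := by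
      intro m hm
      rw [Finset.mem_range] at hm
      have hms : j + m - j = m := by omega
      have hnk : n - (j+m) = N - m := by omega
      have hc : (Nat.choose n (j+m)) * (Nat.choose (j+m) j) = Nat.choose n j * Nat.choose N m := by
        rw [Nat.choose_mul (by omega)]
        congr 2 <;> omega
      rw [hms, hnk, ← drf_as_dff]
      have hcr : (Nat.choose n (j+m) : ℝ) * (Nat.choose (j+m) j : ℝ)
          = (Nat.choose n j : ℝ) * (Nat.choose N m : ℝ) := by
        exact_mod_cast congrArg (fun t : ℕ => (t : ℝ)) hc
      linear_combination ((-1:ℝ)^m * drf lam 1 m * dff lam 1 (N-m)) * hcr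
    rw [Finset.sum_congr rfl key, ← Finset.mul_sum, ← vand]
    have hz : ((-1:ℝ) + 1) = 0 := by ring
    rw [hz]
    rcases Nat.eq_zero_or_pos N with h0 | h0
    · have : n = j := by omega
      simp [this, dff, h0]
    · have hd : dff lam 0 N = 0 := by
        rw [dff]
        apply Finset.prod_eq_zero (Finset.mem_range.mpr h0)
        simp
      rw [hd, mul_zero, if_neg (by omega)]
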